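/- There exists exactly one differentiable function v : (0, ∞) → ℝ such that 3ε² v'(ε) = ε(1 + 2v(ε)) − v(ε) − v(ε)² and v(ε) > 0 hold for all ε > 0. -/

import Mathlib

open MeasureTheory Set Real Filter Metric Topology

set_option maxHeartbeats 1000000

noncomputable def Kk (n : ℕ) (t : ℝ) : ℝ :=
  ∫ s in Ioi (0:ℝ), s ^ n * Real.exp (-(t * s)) * (s + s ^ 2) ^ (-(2:ℝ)/3)

lemma base_pos {s : ℝ} (hs : 0 < s) : 0 < s + s ^ 2 := by positivity

lemma g_pos {s : ℝ} (hs : 0 < s) : 0 < (s + s ^ 2) ^ (-(2:ℝ)/3) :=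
  Real.rpow_pos_of_pos (base_pos hs) _

lemma integrand_contOn (n : ℕ) (t : ℝ) :
    ContinuousOn (fun s : ℝ => s ^ n * Real.exp (-(t * s)) * (s + s ^ 2) ^ (-(2:ℝ)/3))
      (Ioi 0) := by
  apply ContinuousOn.mul
  · exact ((continuous_pow n).continuousOn).mul
      (Real.continuous_exp.comp (continuous_const.mul continuous_id).neg).continuousOn
  · apply ContinuousOn.rpow_const
    · exact (continuous_id.add (continuous_pow 2)).continuousOn
    · intro s hs
      exact Or.inl (base_pos hs).ne'

lemma K_integrable (n : ℕ) {t : ℝ} (ht : 0 < t) :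
    IntegrableOn (fun s : ℝ => s ^ n * Real.exp (-(t * s)) * (s + s ^ 2) ^ (-(2:ℝ)/3))
      (Ioi 0) := by
  have hbound : IntegrableOn (fun s : ℝ => s ^ ((n:ℝ) - 2/3) * Real.exp (-t * s)) (Ioi 0) := by
    have := integrableOn_rpow_mul_exp_neg_mul_rpow (p := 1) (s := (n:ℝ) - 2/3) (b := t)
      (by have : (0:ℝ) ≤ (n:ℝ) := Nat.cast_nonneg n; linarith) zero_lt_one ht
    refine this.congr_fun (fun s hs => ?_) measurableSet_Ioi
    simp only [Real.rpow_one]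
  refine Integrable.mono' hbound
    ((integrand_contOn n t).aestronglyMeasurable measurableSet_Ioi) ?_
  filter_upwards [self_mem_ae_restrict measurableSet_Ioi] with s hs
  have hs : (0:ℝ) < s := hs
  have h1 : (s + s ^ 2) ^ (-(2:ℝ)/3) ≤ s ^ (-(2:ℝ)/3) := by
    apply Real.rpow_le_rpow_of_nonpos hs (by nlinarith)
    norm_num
  have h2 : s ^ n * Real.exp (-(t * s)) * (s + s ^ 2) ^ (-(2:ℝ)/3)
      ≤ s ^ ((n:ℝ) - 2/3) * Real.exp (-t * s) := by
    have : s ^ n * (s + s ^ 2) ^ (-(2:ℝ)/3) ≤ s ^ ((n:ℝ) - 2/3) := by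
      calc s ^ n * (s + s ^ 2) ^ (-(2:ℝ)/3) ≤ s ^ n * s ^ (-(2:ℝ)/3) := by
            exact mul_le_mul_of_nonneg_left h1 (by positivity)
        _ = s ^ ((n:ℝ) - 2/3) := by
            rw [← Real.rpow_natCast s n, ← Real.rpow_add hs]
            ring_nf
    calc s ^ n * Real.exp (-(t * s)) * (s + s ^ 2) ^ (-(2:ℝ)/3)
        = (s ^ n * (s + s ^ 2) ^ (-(2:ℝ)/3)) * Real.exp (-(t * s)) := by ring
      _ ≤ s ^ ((n:ℝ) - 2/3) * Real.exp (-(t*s)) := by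
          exact mul_le_mul_of_nonneg_right this (Real.exp_pos _).le
      _ = s ^ ((n:ℝ) - 2/3) * Real.exp (-t * s) := by rw [neg_mul]
  have hnn : 0 ≤ s ^ n * Real.exp (-(t * s)) * (s + s ^ 2) ^ (-(2:ℝ)/3) := by
    have := g_pos hs
    positivity
  rw [Real.norm_eq_abs, abs_of_nonneg hnn]
  exact h2

lemma K_pos (n : ℕ) {t : ℝ} (ht : 0 < t) : 0 < Kk n t := by
  rw [Kk, setIntegral_pos_iff_support_of_nonneg_ae]
  · have : (Function.support fun s : ℝ => s ^ n * Real.exp (-(t * s)) * (s + s ^ 2) ^ (-(2:ℝ)/3))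
        ∩ Ioi 0 = Ioi 0 := by
      rw [inter_eq_right]
      intro s hs
      have hs : (0:ℝ) < s := hs
      have := g_pos hs
      have : 0 < s ^ n * Real.exp (-(t * s)) * (s + s ^ 2) ^ (-(2:ℝ)/3) := by positivity
      exact Function.mem_support.2 this.ne'
    rw [this, volume_Ioi]
    exact ENNReal.zero_lt_top
  · filter_upwards [self_mem_ae_restrict measurableSet_Ioi] with s hs
    have hs : (0:ℝ) < s := hs
    have := g_pos hs
    positivity
  · exact K_integrable n ht


lemma K_hasDeriv (n : ℕ) {t : ℝ} (ht : 0 < t) :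
    HasDerivAt (Kk n) (-(Kk (n + 1) t)) t := by
  have h2 : (0:ℝ) < t / 2 := by linarith
  have key := hasDerivAt_integral_of_dominated_loc_of_deriv_le (μ := volume.restrict (Ioi 0))
    (F := fun (x : ℝ) (s : ℝ) => s ^ n * Real.exp (-(x * s)) * (s + s ^ 2) ^ (-(2:ℝ)/3))
    (F' := fun (x : ℝ) (s : ℝ) => -(s ^ (n+1) * Real.exp (-(x * s)) * (s + s ^ 2) ^ (-(2:ℝ)/3)))
    (x₀ := t) (s := ball t (t / 2))
    (bound := fun s => s ^ (n+1) * Real.exp (-(t/2 * s)) * (s + s ^ 2) ^ (-(2:ℝ)/3))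
    (ball_mem_nhds t h2)
    (Eventually.of_forall fun x =>
      ((integrand_contOn n x).aestronglyMeasurable measurableSet_Ioi))
    (K_integrable n ht)
    (((integrand_contOn (n+1) t).aestronglyMeasurable measurableSet_Ioi).neg)
    ?_ (K_integrable (n+1) h2) ?_
  · have : (∫ s in Ioi (0:ℝ),
        -(s ^ (n+1) * Real.exp (-(t * s)) * (s + s ^ 2) ^ (-(2:ℝ)/3)))
        = -(Kk (n+1) t) := by
      rw [integral_neg]; rfl
    rw [this] at key
    exact key.2
  · -- bound
    filter_upwards [self_mem_ae_restrict measurableSet_Ioi] with s hs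
    intro x hx
    have hs : (0:ℝ) < s := hs
    have hxt : t / 2 ≤ x := by
      have := abs_lt.1 (mem_ball_iff_norm.1 hx)
      linarith [this.1]
    have hg := g_pos hs
    have hnn : (0:ℝ) ≤ s ^ (n+1) * Real.exp (-(x * s)) * (s + s ^ 2) ^ (-(2:ℝ)/3) := by
      positivity
    rw [norm_neg, Real.norm_eq_abs, abs_of_nonneg hnn]
    have : Real.exp (-(x * s)) ≤ Real.exp (-(t/2 * s)) := by
      apply Real.exp_le_exp.2
      have : t/2 * s ≤ x * s := mul_le_mul_of_nonneg_right hxt hs.le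
      linarith
    have h1 : s ^ (n+1) * Real.exp (-(x * s)) ≤ s ^ (n+1) * Real.exp (-(t/2*s)) :=
      mul_le_mul_of_nonneg_left this (by positivity)
    exact mul_le_mul_of_nonneg_right h1 hg.le
  · -- differentiability
    filter_upwards [self_mem_ae_restrict measurableSet_Ioi] with s hs
    intro x hx
    have hs : (0:ℝ) < s := hs
    have hd : HasDerivAt (fun x : ℝ => Real.exp (-(x * s))) (-s * Real.exp (-(x * s))) x := by
      have : HasDerivAt (fun x : ℝ => -(x * s)) (-s) x := by
        simpa using ((hasDerivAt_id x).mul_const s).fun_neg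
      simpa [mul_comm] using this.exp
    have := (hd.const_mul (s ^ n)).mul_const ((s + s ^ 2) ^ (-(2:ℝ)/3))
    refine this.congr_deriv (Eq.symm ?_)
    rw [pow_succ]
    ring


lemma K_ode {t : ℝ} (ht : 0 < t) :
    3 * t * Kk 2 t + (3 * t - 2) * Kk 1 t - Kk 0 t = 0 := by
  set g : ℝ → ℝ := fun s => (s + s ^ 2) ^ (-(2:ℝ)/3) with hg
  set f' : ℝ → ℝ := fun s =>
      3 * t * (s ^ 2 * Real.exp (-(t * s)) * g s)
      + (3 * t - 2) * (s ^ 1 * Real.exp (-(t * s)) * g s)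
      - s ^ 0 * Real.exp (-(t * s)) * g s with hf'
  set H : ℝ → ℝ := fun s => -3 * (Real.exp (-(t * s)) * (s + s ^ 2) ^ ((1:ℝ)/3)) with hH
  have i2 := (K_integrable 2 ht).const_mul (3 * t)
  have i1 := (K_integrable 1 ht).const_mul (3 * t - 2)
  have i0 := K_integrable 0 ht
  have f'int : IntegrableOn f' (Ioi 0) := (i2.add i1).sub i0
  have hderiv : ∀ s ∈ Ioi (0:ℝ), HasDerivAt H (f' s) s := by
    intro s hs
    have hs : (0:ℝ) < s := hs
    have h1 : HasDerivAt (fun s : ℝ => Real.exp (-(t * s))) (-t * Real.exp (-(t * s))) s := by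
      have : HasDerivAt (fun s : ℝ => -(t * s)) (-t) s := by
        simpa using ((hasDerivAt_id s).const_mul t).fun_neg
      simpa [mul_comm] using this.exp
    have hb : HasDerivAt (fun s : ℝ => s + s ^ 2) (1 + 2 * s) s := by
      simpa using (hasDerivAt_id s).fun_add (hasDerivAt_pow 2 s)
    have h2 : HasDerivAt (fun s : ℝ => (s + s ^ 2) ^ ((1:ℝ)/3))
        ((1 + 2 * s) * ((1:ℝ)/3) * (s + s ^ 2) ^ ((1:ℝ)/3 - 1)) s :=
      hb.rpow_const (p := (1:ℝ)/3) (Or.inl (base_pos hs).ne')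
    have h3 := (h1.fun_mul h2).const_mul (-3 : ℝ)
    have e1 : (s + s ^ 2) ^ ((1:ℝ)/3) = (s + s ^ 2) * g s := by
      rw [hg]
      have : ((1:ℝ)/3) = 1 + (-(2:ℝ)/3) := by norm_num
      rw [this, Real.rpow_add (base_pos hs), Real.rpow_one]
    have e2 : ((1:ℝ)/3 - 1) = (-(2:ℝ)/3) := by norm_num
    refine h3.congr_deriv (Eq.symm ?_)
    rw [hf', e2, e1]
    simp only [hg]
    ring
  have hcont : ContinuousWithinAt H (Ici 0) 0 := by
    apply ContinuousAt.continuousWithinAt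
    apply ContinuousAt.mul continuousAt_const
    apply ContinuousAt.mul
    · exact (Real.continuous_exp.comp (continuous_const.mul continuous_id).neg).continuousAt
    · apply ContinuousAt.rpow_const
      · exact (continuous_id.add (continuous_pow 2)).continuousAt
      · right; norm_num
  have htend : Tendsto H atTop (𝓝 0) := by
    apply squeeze_zero_norm' (a := fun s => 6 * (s ^ ((2:ℝ)/3) * Real.exp (-t * s)))
    · filter_upwards [eventually_ge_atTop (1:ℝ)] with s hs1
      have hs : (0:ℝ) < s := by linarith
      have hb1 : (s + s ^ 2) ^ ((1:ℝ)/3) ≤ 2 * s ^ ((2:ℝ)/3) := by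
        have hle : s + s ^ 2 ≤ 2 * s ^ 2 := by nlinarith
        have h4 : (s + s ^ 2) ^ ((1:ℝ)/3) ≤ (2 * s ^ 2) ^ ((1:ℝ)/3) :=
          Real.rpow_le_rpow (by positivity) hle (by norm_num)
        have h5 : (2 * s ^ 2 : ℝ) ^ ((1:ℝ)/3) = 2 ^ ((1:ℝ)/3) * (s ^ 2) ^ ((1:ℝ)/3) :=
          Real.mul_rpow (by norm_num) (by positivity)
        have h6 : ((s ^ 2 : ℝ)) ^ ((1:ℝ)/3) = s ^ ((2:ℝ)/3) := by
          rw [← Real.rpow_natCast s 2, ← Real.rpow_mul hs.le]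
          norm_num
        have h7 : (2:ℝ) ^ ((1:ℝ)/3) ≤ 2 := by
          have := Real.rpow_le_rpow_of_exponent_le (x := 2) (by norm_num)
            (show (1:ℝ)/3 ≤ 1 by norm_num)
          simpa using this
        calc (s + s ^ 2) ^ ((1:ℝ)/3) ≤ 2 ^ ((1:ℝ)/3) * (s ^ 2) ^ ((1:ℝ)/3) := by
              rw [← h5]; exact h4
          _ ≤ 2 * s ^ ((2:ℝ)/3) := by
              rw [h6]
              exact mul_le_mul_of_nonneg_right h7 (by positivity)
      have : ‖H s‖ = 3 * (Real.exp (-(t * s)) * (s + s ^ 2) ^ ((1:ℝ)/3)) := by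
        rw [hH, Real.norm_eq_abs, abs_mul]
        have hnn : (0:ℝ) ≤ Real.exp (-(t * s)) * (s + s ^ 2) ^ ((1:ℝ)/3) := by
          have := Real.rpow_nonneg (by positivity : (0:ℝ) ≤ s + s ^ 2) ((1:ℝ)/3)
          positivity
        rw [abs_of_nonneg hnn]
        norm_num
      rw [this]
      calc 3 * (Real.exp (-(t * s)) * (s + s ^ 2) ^ ((1:ℝ)/3))
          ≤ 3 * (Real.exp (-(t * s)) * (2 * s ^ ((2:ℝ)/3))) := by
            apply mul_le_mul_of_nonneg_left _ (by norm_num)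
            exact mul_le_mul_of_nonneg_left hb1 (Real.exp_pos _).le
        _ = 6 * (s ^ ((2:ℝ)/3) * Real.exp (-t * s)) := by rw [neg_mul]; ring
    · have := (tendsto_rpow_mul_exp_neg_mul_atTop_nhds_zero ((2:ℝ)/3) t ht).const_mul (6:ℝ)
      simpa using this
  have key := integral_Ioi_of_hasDerivAt_of_tendsto hcont hderiv f'int htend
  have hH0 : H 0 = 0 := by
    rw [hH]
    simp [Real.zero_rpow (by norm_num : (1:ℝ)/3 ≠ 0)]
  rw [hH0, sub_zero] at key
  have expand : ∫ s in Ioi (0:ℝ), f' s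
      = 3 * t * Kk 2 t + (3 * t - 2) * Kk 1 t - Kk 0 t := by
    have i21 : Integrable (fun s : ℝ =>
        3 * t * (s ^ 2 * Real.exp (-(t * s)) * (s + s ^ 2) ^ (-(2:ℝ)/3))
        + (3 * t - 2) * (s ^ 1 * Real.exp (-(t * s)) * (s + s ^ 2) ^ (-(2:ℝ)/3)))
        (volume.restrict (Ioi 0)) := i2.add i1
    rw [hf']
    beta_reduce
    simp only [hg]
    rw [integral_sub i21 i0, integral_add i2 i1, integral_const_mul, integral_const_mul]
    simp only [Kk]
  rw [← expand, key]


noncomputable def vv : ℝ → ℝ := fun x => Kk 1 ((3 * x)⁻¹) / Kk 0 ((3 * x)⁻¹)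

lemma vv_sol {ε : ℝ} (hε : 0 < ε) : DifferentiableAt ℝ vv ε ∧
    3 * ε^2 * deriv vv ε = ε * (1 + 2 * vv ε) - vv ε - (vv ε)^2 ∧ 0 < vv ε := by
  have h3ε : (3:ℝ) * ε ≠ 0 := by positivity
  have ht : (0:ℝ) < (3 * ε)⁻¹ := by positivity
  set t : ℝ := (3 * ε)⁻¹ with htdef
  set a := Kk 0 t with ha
  set b := Kk 1 t with hb
  set c := Kk 2 t with hc
  have ha0 : 0 < a := K_pos 0 ht
  have hb0 : 0 < b := K_pos 1 ht
  have hτ : HasDerivAt (fun x : ℝ => (3 * x)⁻¹) (-3 / (3 * ε)^2) ε := by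
    have h1 : HasDerivAt (fun x : ℝ => 3 * x) 3 ε := by
      simpa using (hasDerivAt_id ε).const_mul (3:ℝ)
    exact h1.fun_inv h3ε
  have hA : HasDerivAt (fun x : ℝ => Kk 1 ((3 * x)⁻¹)) (-c * (-3 / (3 * ε)^2)) ε := by
    have := (K_hasDeriv 1 ht).comp ε hτ
    exact this
  have hB : HasDerivAt (fun x : ℝ => Kk 0 ((3 * x)⁻¹)) (-b * (-3 / (3 * ε)^2)) ε := by
    have := (K_hasDeriv 0 ht).comp ε hτ
    exact this
  have hv : HasDerivAt vv
      ((-c * (-3 / (3 * ε)^2) * a - b * (-b * (-3 / (3 * ε)^2))) / a^2) ε := hA.div hB ha0.ne'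
  refine ⟨hv.differentiableAt, ?_, div_pos hb0 ha0⟩
  rw [hv.deriv]
  have hode := K_ode ht
  rw [← ha, ← hb, ← hc, htdef] at hode
  have hkey : c = ε * a + (2 * ε - 1) * b := by
    field_simp at hode
    linarith
  have hvv : vv ε = b / a := rfl
  rw [hvv, hkey]
  field_simp
  ring


def IsSol (w : ℝ → ℝ) : Prop := ∀ ε : ℝ, 0 < ε → DifferentiableAt ℝ w ε ∧
  3 * ε^2 * deriv w ε = ε * (1 + 2 * w ε) - w ε - (w ε)^2 ∧ 0 < w ε

lemma sol_deriv {w : ℝ → ℝ} (hw : IsSol w) {x : ℝ} (hx : 0 < x) :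
    deriv w x = (x * (1 + 2 * w x) - w x - (w x)^2) / (3 * x^2) := by
  obtain ⟨_, heq, _⟩ := hw x hx
  rw [← heq]
  field_simp

lemma sol_hasDeriv {w : ℝ → ℝ} (hw : IsSol w) {x : ℝ} (hx : 0 < x) :
    HasDerivAt w ((x * (1 + 2 * w x) - w x - (w x)^2) / (3 * x^2)) x := by
  have := (hw x hx).1.hasDerivAt
  rwa [sol_deriv hw hx] at this

lemma sol_contOn {w : ℝ → ℝ} (hw : IsSol w) : ContinuousOn w (Ioi 0) := fun x hx =>
  ((hw x hx).1.continuousAt).continuousWithinAt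

lemma sol_deriv_neg {w : ℝ → ℝ} (hw : IsSol w) {z : ℝ} (hz : 0 < z) (hz8 : z ≤ 1/8)
    (h2z : 2 * z < w z) : deriv w z < 0 := by
  rw [sol_deriv hw hz]
  apply div_neg_of_neg_of_pos _ (by positivity)
  have hW : 0 < w z := (hw z hz).2.2
  have h1 : 2 * z * w z ≤ w z / 4 := by nlinarith
  nlinarith [sq_nonneg (w z)]

/-- Any positive solution satisfies `w x ≤ 2 x` for small `x`. -/
lemma sol_bound {w : ℝ → ℝ} (hw : IsSol w) {x : ℝ} (hx : 0 < x) (hx8 : x ≤ 1/8) :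
    w x ≤ 2 * x := by
  by_contra hcon
  push_neg at hcon
  -- Claim (a): w y > 2 y for all y ∈ (0, x]
  have claimA : ∀ y : ℝ, 0 < y → y ≤ x → 2 * y < w y := by
    intro y hy hyε
    by_contra hy2
    push_neg at hy2
    have hyx : y < x := by
      rcases lt_or_eq_of_le hyε with h | h
      · exact h
      · exfalso; rw [h] at hy2; linarith
    have hIcc_sub : Icc y x ⊆ Ioi 0 := fun z hz => lt_of_lt_of_le hy hz.1
    have hcontw : ContinuousOn w (Icc y x) := (sol_contOn hw).mono hIcc_sub
    have hfcont : ContinuousOn (fun z => w z - 2 * z) (Icc y x) :=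
      hcontw.sub ((continuous_const.mul continuous_id).continuousOn)
    set S := Icc y x ∩ (fun z => w z - 2 * z) ⁻¹' (Iic 0) with hS
    have hSclosed : IsClosed S := hfcont.preimage_isClosed_of_isClosed isClosed_Icc isClosed_Iic
    have hScomp : IsCompact S := isCompact_Icc.of_isClosed_subset hSclosed inter_subset_left
    have hSne : S.Nonempty := ⟨y, ⟨le_refl y, hyx.le⟩, by simp; linarith⟩
    set ε₂ := sSup S with hε₂
    have hmem : ε₂ ∈ S := hScomp.sSup_mem hSne
    obtain ⟨⟨hyε₂, hε₂x⟩, hwε₂⟩ := hmem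
    simp only [mem_preimage, mem_Iic, sub_nonpos] at hwε₂
    have hε₂pos : 0 < ε₂ := lt_of_lt_of_le hy hyε₂
    have hε₂lt : ε₂ < x := by
      rcases lt_or_eq_of_le hε₂x with h | h
      · exact h
      · exfalso; rw [h] at hwε₂; linarith
    have hstrict : ∀ z, ε₂ < z → z ≤ x → 2 * z < w z := by
      intro z hz1 hz2
      by_contra hz3
      push_neg at hz3
      have : z ∈ S := ⟨⟨le_trans hyε₂ hz1.le, hz2⟩, by simp; linarith⟩
      have := le_csSup hScomp.bddAbove this
      linarith
    have hanti : StrictAntiOn w (Icc ε₂ x) := by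
      apply strictAntiOn_of_deriv_neg (convex_Icc _ _)
        (hcontw.mono (Icc_subset_Icc hyε₂ le_rfl))
      intro z hz
      rw [interior_Icc] at hz
      exact sol_deriv_neg hw (lt_trans hε₂pos hz.1) (le_trans hz.2.le hx8)
        (hstrict z hz.1 hz.2.le)
    have := hanti ⟨le_rfl, hε₂lt.le⟩ ⟨hε₂lt.le, le_rfl⟩ hε₂lt
    -- w x < w ε₂ ≤ 2 ε₂ < 2 x < w x
    linarith
  -- Claim (b): w y ≥ w x for y ∈ (0, x]
  have claimB : ∀ y : ℝ, 0 < y → y ≤ x → w x ≤ w y := by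
    intro y hy hyx
    rcases eq_or_lt_of_le hyx with h | h
    · rw [h]
    · have hIcc_sub : Icc y x ⊆ Ioi 0 := fun z hz => lt_of_lt_of_le hy hz.1
      have hanti : StrictAntiOn w (Icc y x) := by
        apply strictAntiOn_of_deriv_neg (convex_Icc _ _) ((sol_contOn hw).mono hIcc_sub)
        intro z hz
        rw [interior_Icc] at hz
        exact sol_deriv_neg hw (lt_trans hy hz.1) (le_trans hz.2.le hx8)
          (claimA z (lt_trans hy hz.1) hz.2.le)
      exact (hanti ⟨le_rfl, h.le⟩ ⟨h.le, le_rfl⟩ h).le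
  -- Claim (c): blow-up of 1/w + 1/(6 y) near 0 gives a contradiction
  set m := w x with hm
  have hm0 : 0 < m := (hw x hx).2.2
  set δ := (m^2 + 2*m) / (2 + 4*m) with hδdef
  have hδ0 : 0 < δ := by positivity
  set ε₄ := min x δ with hε₄def
  have hε₄0 : 0 < ε₄ := lt_min hx hδ0
  have hε₄x : ε₄ ≤ x := min_le_left _ _
  have hε₄δ : ε₄ ≤ δ := min_le_right _ _
  set G : ℝ → ℝ := fun z => (w z)⁻¹ + (6 * z)⁻¹ with hG
  have hGderiv : ∀ z : ℝ, 0 < z → z ≤ ε₄ →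
      HasDerivAt G (-((z * (1 + 2 * w z) - w z - (w z)^2) / (3 * z^2)) / (w z)^2
        + (-6 / (6 * z)^2)) z := by
    intro z hz hzε₄
    have hWz : 0 < w z := (hw z hz).2.2
    have h1 := (sol_hasDeriv hw hz).inv hWz.ne'
    have h2 : HasDerivAt (fun z : ℝ => (6 * z)⁻¹) (-6 / (6 * z)^2) z := by
      have h3 : HasDerivAt (fun z : ℝ => 6 * z) 6 z := by
        simpa using (hasDerivAt_id z).const_mul (6:ℝ)
      exact h3.fun_inv (by positivity)
    exact h1.add h2
  have hGd_nonneg : ∀ z : ℝ, 0 < z → z ≤ ε₄ →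
      0 ≤ -((z * (1 + 2 * w z) - w z - (w z)^2) / (3 * z^2)) / (w z)^2 + (-6 / (6 * z)^2) := by
    intro z hz hzε₄
    have hWz : 0 < w z := (hw z hz).2.2
    have hmW : m ≤ w z := claimB z hz (le_trans hzε₄ hε₄x)
    have hkey : z * (2 + 4 * w z) ≤ (w z)^2 + 2 * w z := by
      have hδle : δ * (2 + 4 * w z) ≤ (w z)^2 + 2 * w z := by
        rw [hδdef, div_mul_eq_mul_div, div_le_iff₀ (by positivity)]
        nlinarith [sq_nonneg (w z - m), mul_nonneg (sub_nonneg.2 hmW) hm0.le,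
          mul_nonneg (sub_nonneg.2 hmW) (sub_nonneg.2 hmW)]
      have : z * (2 + 4 * w z) ≤ δ * (2 + 4 * w z) :=
        mul_le_mul_of_nonneg_right (le_trans hzε₄ hε₄δ) (by positivity)
      linarith
    have hexpr : -((z * (1 + 2 * w z) - w z - (w z)^2) / (3 * z^2)) / (w z)^2 + (-6 / (6 * z)^2)
        = (2 * (w z + (w z)^2 - z - 2 * z * w z) - (w z)^2) / (6 * z^2 * (w z)^2) := by
      field_simp
      ring
    rw [hexpr]
    apply div_nonneg _ (by positivity)
    nlinarith
  -- G is monotone on (0, ε₄]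
  have hGmono : ∀ y : ℝ, 0 < y → y ≤ ε₄ → G y ≤ G ε₄ := by
    intro y hy hyε₄
    rcases eq_or_lt_of_le hyε₄ with h | h
    · rw [h]
    · have hsub : Icc y ε₄ ⊆ Ioi 0 := fun z hz => lt_of_lt_of_le hy hz.1
      have hGcont : ContinuousOn G (Icc y ε₄) := by
        apply ContinuousOn.add
        · exact ((sol_contOn hw).mono hsub).inv₀ (fun z hz => ((hw z (hsub hz)).2.2).ne')
        · exact ((continuous_const.mul continuous_id).continuousOn).inv₀
            (fun z hz => by have := hsub hz; simp at this ⊢; positivity)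
      have hmono : MonotoneOn G (Icc y ε₄) := by
        apply monotoneOn_of_deriv_nonneg (convex_Icc _ _) hGcont
        · intro z hz
          rw [interior_Icc] at hz
          exact ((hGderiv z (lt_trans hy hz.1) hz.2.le).differentiableAt).differentiableWithinAt
        · intro z hz
          rw [interior_Icc] at hz
          rw [(hGderiv z (lt_trans hy hz.1) hz.2.le).deriv]
          exact hGd_nonneg z (lt_trans hy hz.1) hz.2.le
      exact hmono ⟨le_rfl, h.le⟩ ⟨h.le, le_rfl⟩ h.le
  -- contradiction by letting y → 0
  have hGε₄nn : 0 ≤ G ε₄ := by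
    have := (hw ε₄ hε₄0).2.2
    have h6 : (0:ℝ) < 6 * ε₄ := by positivity
    rw [hG]
    positivity
  set y₀ := min ε₄ (6 * (G ε₄ + 1))⁻¹ with hy₀def
  have hy₀0 : 0 < y₀ := lt_min hε₄0 (by positivity)
  have hy₀ε₄ : y₀ ≤ ε₄ := min_le_left _ _
  have h1 : G y₀ ≤ G ε₄ := hGmono y₀ hy₀0 hy₀ε₄
  have h2 : (6 * y₀)⁻¹ ≤ G y₀ := by
    rw [hG]
    have := (hw y₀ hy₀0).2.2
    have : 0 < (w y₀)⁻¹ := by positivity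
    linarith
  have h3 : G ε₄ + 1 ≤ (6 * y₀)⁻¹ := by
    have h4 : 6 * y₀ ≤ (G ε₄ + 1)⁻¹ := by
      have : y₀ ≤ (6 * (G ε₄ + 1))⁻¹ := min_le_right _ _
      rw [mul_inv] at this
      calc 6 * y₀ ≤ 6 * (6⁻¹ * (G ε₄ + 1)⁻¹) := by linarith
        _ = (G ε₄ + 1)⁻¹ := by ring
    calc G ε₄ + 1 = ((G ε₄ + 1)⁻¹)⁻¹ := by rw [inv_inv]
      _ ≤ (6 * y₀)⁻¹ := by
          apply inv_anti₀ (by positivity) h4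
  have h5 : G ε₄ + 1 ≤ G ε₄ := le_trans h3 (le_trans h2 h1)
  linarith


lemma sol_unique {v w : ℝ → ℝ} (hv : IsSol v) (hw : IsSol w) {ε : ℝ} (hε : 0 < ε) :
    w ε = v ε := by
  set c : ℝ → ℝ := fun x => (2 * x - 1 - v x - w x) / (3 * x^2) with hcdef
  have hccont : ContinuousOn c (Ioi 0) := by
    apply ContinuousOn.div
    · exact ((continuous_const.mul continuous_id).continuousOn.sub
        continuousOn_const).sub ((sol_contOn hv)) |>.sub (sol_contOn hw)
    · exact (continuous_const.mul (continuous_pow 2)).continuousOn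
    · intro x hx
      have : (0:ℝ) < x := hx
      positivity
  set C : ℝ → ℝ := fun y => ∫ x in (1/8 : ℝ)..y, c x with hCdef
  have hCderiv : ∀ y : ℝ, 0 < y → HasDerivAt C (c y) y := by
    intro y hy
    have hsub : uIcc (1/8 : ℝ) y ⊆ Ioi 0 := by
      rw [uIcc_eq_union]
      rintro z (hz | hz)
      · exact lt_of_lt_of_le (by norm_num) hz.1
      · exact lt_of_lt_of_le hy hz.1
    have hint : IntervalIntegrable c volume (1/8) y :=
      (hccont.mono hsub).intervalIntegrable
    exact intervalIntegral.integral_hasDerivAt_right hint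
      ((hccont.stronglyMeasurableAtFilter isOpen_Ioi y hy))
      (hccont.continuousAt (isOpen_Ioi.mem_nhds hy))
  have hDeq : ∀ x : ℝ, 0 < x → HasDerivAt (fun y => w y - v y) (c x * (w x - v x)) x := by
    intro x hx
    have h := (sol_hasDeriv hw hx).fun_sub (sol_hasDeriv hv hx)
    refine h.congr_deriv (Eq.symm ?_)
    rw [hcdef]
    field_simp
    ring
  set Φ : ℝ → ℝ := fun y => (w y - v y) * Real.exp (-C y) with hΦdef
  have hΦderiv : ∀ x : ℝ, 0 < x → HasDerivAt Φ 0 x := by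
    intro x hx
    have h := (hDeq x hx).fun_mul (((hCderiv x hx).fun_neg).exp)
    refine h.congr_deriv (Eq.symm ?_)
    ring
  have hΦconst : ∀ y : ℝ, 0 < y → Φ y = Φ (1/8) := by
    intro y hy
    set a := min y (1/8 : ℝ) with hadef
    set b := max y (1/8 : ℝ) with hbdef
    have ha0 : 0 < a := lt_min hy (by norm_num)
    have hsub : Icc a b ⊆ Ioi 0 := fun z hz => lt_of_lt_of_le ha0 hz.1
    have key : ∀ z ∈ Icc a b, Φ z = Φ a := by
      apply constant_of_has_deriv_right_zero
      · exact fun z hz => ((hΦderiv z (hsub hz)).continuousAt).continuousWithinAt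
      · intro z hz
        exact ((hΦderiv z (hsub ⟨hz.1, hz.2.le⟩)).hasDerivWithinAt)
    have h1 := key y ⟨min_le_left _ _, le_max_left _ _⟩
    have h2 := key (1/8) ⟨min_le_right _ _, le_max_right _ _⟩
    rw [h1, h2]
  have hrel : ∀ y : ℝ, 0 < y → (w y - v y) * Real.exp (-C y) = w (1/8) - v (1/8) := by
    intro y hy
    have := hΦconst y hy
    rw [hΦdef] at this
    simp only at this
    rw [this]
    have hC8 : C (1/8 : ℝ) = 0 := intervalIntegral.integral_same
    rw [hC8]
    simp
  -- Step: the difference vanishes at 1/8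
  have hD8 : w (1/8 : ℝ) - v (1/8 : ℝ) = 0 := by
    by_contra hne
    have habs : 0 < |w (1/8 : ℝ) - v (1/8 : ℝ)| := abs_pos.2 hne
    set Db := |w (1/8 : ℝ) - v (1/8 : ℝ)| with hDbdef
    -- key estimate for every ε' ∈ (0,1/8]
    have hest : ∀ y : ℝ, 0 < y → y ≤ 1/8 → Db ≤ 16 * Real.exp 2 * y^2 := by
      intro y hy hy8
      have hCy : (4 * y)⁻¹ - 2 ≤ C y := by
        have hsym : C y = -∫ x in y..(1/8 : ℝ), c x := by
          rw [hCdef]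
          simp only
          rw [intervalIntegral.integral_symm]
        have hsub : Icc y (1/8 : ℝ) ⊆ Ioi 0 := fun z hz => lt_of_lt_of_le hy hz.1
        have hintc : IntervalIntegrable c volume y (1/8) := by
          apply (hccont.mono _).intervalIntegrable
          rwa [uIcc_of_le hy8]
        have hint2 : IntervalIntegrable (fun x : ℝ => -(4 * x^2)⁻¹) volume y (1/8) := by
          apply ContinuousOn.intervalIntegrable
          rw [uIcc_of_le hy8]
          apply ContinuousOn.neg
          apply ContinuousOn.inv₀ (continuous_const.mul (continuous_pow 2)).continuousOn
          intro z hz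
          have := hsub hz
          have : (0:ℝ) < z := this
          exact (by positivity : (4:ℝ) * z^2 ≠ 0)
        have hmono : ∫ x in y..(1/8 : ℝ), c x ≤ ∫ x in y..(1/8 : ℝ), -(4 * x^2)⁻¹ := by
          apply intervalIntegral.integral_mono_on hy8 hintc hint2
          intro z hz
          have hz0 : (0:ℝ) < z := hsub hz
          have hv0 : 0 < v z := (hv z hz0).2.2
          have hw0 : 0 < w z := (hw z hz0).2.2
          have hnum : 2 * z - 1 - v z - w z ≤ -(3/4) := by
            have := hz.2
            linarith
          have h3 : (0:ℝ) < 3 * z^2 := by positivity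
          calc c z ≤ (-(3/4)) / (3 * z^2) := by
                rw [hcdef]
                exact (div_le_div_iff_of_pos_right h3).2 hnum
            _ = -(4 * z^2)⁻¹ := by field_simp
        have hcomp : ∫ x in y..(1/8 : ℝ), -(4 * x^2)⁻¹ = 2 - (4 * y)⁻¹ := by
          have hderivA : ∀ x ∈ uIcc y (1/8 : ℝ), HasDerivAt (fun z : ℝ => (4 * z)⁻¹)
              (-(4 * x^2)⁻¹) x := by
            intro x hx
            rw [uIcc_of_le hy8] at hx
            have hx0 : (0:ℝ) < x := hsub hx
            have h4 : HasDerivAt (fun z : ℝ => 4 * z) 4 x := by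
              simpa using (hasDerivAt_id x).const_mul (4:ℝ)
            have := h4.fun_inv (by positivity)
            refine this.congr_deriv (Eq.symm ?_)
            field_simp
          rw [intervalIntegral.integral_eq_sub_of_hasDerivAt hderivA hint2]
          norm_num
        rw [hsym]
        rw [hcomp] at hmono
        linarith
      have hby := hrel y hy
      have hDbeq : Db = |w y - v y| * Real.exp (-C y) := by
        rw [hDbdef, ← hby, abs_mul, abs_of_pos (Real.exp_pos _)]
      have habsle : |w y - v y| ≤ 4 * y := by
        have h1 := sol_bound hv hy hy8
        have h2 := sol_bound hw hy hy8
        have h3 := (hv y hy).2.2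
        have h4 := (hw y hy).2.2
        rw [abs_le]
        constructor <;> linarith
      have hexp : Real.exp (-C y) ≤ Real.exp 2 * (4 * y) := by
        have h1 : Real.exp (-C y) ≤ Real.exp (2 - (4 * y)⁻¹) := by
          apply Real.exp_le_exp.2
          linarith
        have h2 : Real.exp (2 - (4 * y)⁻¹) = Real.exp 2 * Real.exp (-(4 * y)⁻¹) := by
          rw [← Real.exp_add]; ring_nf
        have h3 : Real.exp (-(4 * y)⁻¹) ≤ 4 * y := by
          have h4 : (0:ℝ) < (4 * y)⁻¹ := by positivity
          have h5 : (4 * y)⁻¹ ≤ Real.exp ((4 * y)⁻¹) := by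
            linarith [Real.add_one_le_exp ((4 * y)⁻¹)]
          rw [Real.exp_neg]
          calc (Real.exp ((4 * y)⁻¹))⁻¹ ≤ ((4 * y)⁻¹)⁻¹ :=
                inv_anti₀ h4 h5
            _ = 4 * y := inv_inv _
        calc Real.exp (-C y) ≤ Real.exp 2 * Real.exp (-(4 * y)⁻¹) := by rw [← h2]; exact h1
          _ ≤ Real.exp 2 * (4 * y) := by
              exact mul_le_mul_of_nonneg_left h3 (Real.exp_pos _).le
      calc Db = |w y - v y| * Real.exp (-C y) := hDbeq
        _ ≤ (4 * y) * (Real.exp 2 * (4 * y)) := by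
            apply mul_le_mul habsle hexp (Real.exp_pos _).le (by positivity)
        _ = 16 * Real.exp 2 * y^2 := by ring
    -- choose y small
    set y₁ := min (1/8 : ℝ) (Db / (4 * Real.exp 2)) with hy₁def
    have hy₁0 : 0 < y₁ := lt_min (by norm_num) (by positivity)
    have hy₁8 : y₁ ≤ 1/8 := min_le_left _ _
    have hy₁D : y₁ ≤ Db / (4 * Real.exp 2) := min_le_right _ _
    have := hest y₁ hy₁0 hy₁8
    have hcontr : 16 * Real.exp 2 * y₁^2 < Db := by
      have h1 : 16 * Real.exp 2 * y₁^2 ≤ 16 * Real.exp 2 * ((1/8) * y₁) := by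
        have : y₁^2 ≤ (1/8) * y₁ := by nlinarith
        exact mul_le_mul_of_nonneg_left this (by positivity)
      have h2 : 16 * Real.exp 2 * ((1/8) * y₁) = 2 * Real.exp 2 * y₁ := by ring
      have h3 : 2 * Real.exp 2 * y₁ ≤ 2 * Real.exp 2 * (Db / (4 * Real.exp 2)) :=
        mul_le_mul_of_nonneg_left hy₁D (by positivity)
      have h4 : 2 * Real.exp 2 * (Db / (4 * Real.exp 2)) = Db / 2 := by
        field_simp
        ring
      linarith
    linarith
  -- conclude
  have := hrel ε hε
  rw [hD8] at this
  have hexp := Real.exp_pos (-C ε)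
  have : w ε - v ε = 0 := by
    rcases mul_eq_zero.1 this with h | h
    · exact h
    · exfalso; exact hexp.ne' h
  linarith

/-- There is exactly one differentiable function `v` on `(0,∞)` satisfying the
Riccati equation `3ε² v' = ε(1 + 2v) − v − v²` with `v(ε) > 0` for all `ε > 0`
(uniqueness meaning any two such functions agree on `(0,∞)`). -/
theorem statement17 :
    ∃ v : ℝ → ℝ,
      (∀ ε : ℝ, 0 < ε → DifferentiableAt ℝ v ε ∧
        3 * ε^2 * deriv v ε = ε * (1 + 2 * v ε) - v ε - (v ε)^2 ∧ 0 < v ε) ∧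
      ∀ w : ℝ → ℝ,
        (∀ ε : ℝ, 0 < ε → DifferentiableAt ℝ w ε ∧
          3 * ε^2 * deriv w ε = ε * (1 + 2 * w ε) - w ε - (w ε)^2 ∧ 0 < w ε) →
        ∀ ε : ℝ, 0 < ε → w ε = v ε := by
  have hv : IsSol vv := fun ε hε => vv_sol hε
  exact ⟨vv, fun ε hε => vv_sol hε, fun w hw ε hε => sol_unique hv hw hε⟩
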